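/- Let R be a commutative reduced unital ring, σ : R → R a ring endomorphism, and δ : R → R a σ-derivation. If the Ore extension R[x;σ,δ] is a simple ring, then σ is injective. -/
import Mathlib


/-- `δ` is a `σ`-derivation of `R`: it is additive and satisfies the twisted Leibniz rule
`δ(ab) = σ(a)δ(b) + δ(a)b`. -/
def IsSigmaDerivation {R : Type*} [Ring R] (σ : R →+* R) (δ : R → R) : Prop :=
  (∀ a b : R, δ (a + b) = δ a + δ b) ∧ ∀ a b : R, δ (a * b) = σ a * δ b + δ a * b

/-- `S`, together with the ring morphism `f : R →+* S` and the element `x : S`, is an Ore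
extension `R[x;σ,δ]`: the powers `1, x, x², …` form a basis of `S` as a left `R`-module
(i.e. every element of `S` is, in a unique way, a finite sum `Σᵢ f(aᵢ) xⁱ`), and the
commutation rule `x·r = σ(r)·x + δ(r)` holds for all `r ∈ R`. -/
structure IsOreExtension {R S : Type*} [Ring R] [Ring S]
    (σ : R →+* R) (δ : R → R) (f : R →+* S) (x : S) : Prop where
  basis : Function.Bijective fun a : ℕ →₀ R => a.sum fun i r => f r * x ^ i
  rel : ∀ r : R, x * f r = f (σ r) * x + f (δ r)

/-- `R` is `σ`-`δ`-simple: the only two-sided ideals `J` of `R` with `σ(J) ⊆ J` and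
`δ(J) ⊆ J` are `{0}` and `R`. -/
def IsSigmaDeltaSimple {R : Type*} [Ring R] (σ : R →+* R) (δ : R → R) : Prop :=
  ∀ J : TwoSidedIdeal R, (∀ a ∈ J, σ a ∈ J) → (∀ a ∈ J, δ a ∈ J) → J = ⊥ ∨ J = ⊤

/-- `R` is `δ`-simple: the only two-sided ideals `J` of `R` with `δ(J) ⊆ J` are `{0}`
and `R`. -/
def IsDeltaSimple {R : Type*} [Ring R] (δ : R → R) : Prop :=
  ∀ J : TwoSidedIdeal R, (∀ a ∈ J, δ a ∈ J) → J = ⊥ ∨ J = ⊤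

lemma ore_aux {R S : Type*} [CommRing R] [IsReduced R] [Ring S] (σ : R →+* R) (δ : R → R)
    (hδ : IsSigmaDerivation σ δ) (f : R →+* S) (x : S)
    (hS : IsOreExtension σ δ f x) (hsimple : IsSimpleRing S) {a : R} (hσa : σ a = 0) :
    a = 0 := by
  classical
  by_contra ha
  obtain ⟨hadd, hmulδ⟩ := hδ
  -- key commutative identity
  have hkey : ∀ v : R, δ a * v = σ v * δ a + δ v * a := by
    intro v
    have h1 := hmulδ a v
    have h2 := hmulδ v a
    rw [mul_comm a v, h2, hσa, zero_mul, zero_add] at h1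
    exact h1.symm
  set A := Localization.Away a with hA
  let C : R →+* A := algebraMap R A
  let inv : A := IsLocalization.Away.invSelf a
  have hinv : C a * inv = 1 := IsLocalization.Away.mul_invSelf a
  set q : A := C (δ a) * inv with hqdef
  have hq : ∀ v : R, q * C v = C (σ v) * q + C (δ v) := by
    intro v
    have hm : C (δ a) * C v = C (σ v) * C (δ a) + C (δ v) * C a := by
      rw [← map_mul, ← map_mul, ← map_mul, ← map_add, hkey v]
    calc q * C v = (C (δ a) * C v) * inv := by rw [hqdef]; ring
      _ = (C (σ v) * C (δ a) + C (δ v) * C a) * inv := by rw [hm]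
      _ = C (σ v) * (C (δ a) * inv) + C (δ v) * (C a * inv) := by ring
      _ = C (σ v) * q + C (δ v) := by rw [hinv, mul_one, hqdef]
  -- the additive map F
  let Fhom : (ℕ →₀ R) →+ S :=
    { toFun := fun b => b.sum fun i r => f r * x ^ i
      map_zero' := Finsupp.sum_zero_index
      map_add' := fun b c => by
        show (b + c).sum (fun i r => f r * x ^ i)
          = b.sum (fun i r => f r * x ^ i) + c.sum (fun i r => f r * x ^ i)
        exact Finsupp.sum_add_index' (fun i => by simp)
          (fun i r₁ r₂ => by rw [map_add, add_mul]) }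
  have hFbij : Function.Bijective Fhom := hS.basis
  let E : (ℕ →₀ R) ≃+ S := AddEquiv.ofBijective Fhom hFbij
  let Ghom : (ℕ →₀ R) →+ A :=
    { toFun := fun b => b.sum fun i r => C r * q ^ i
      map_zero' := Finsupp.sum_zero_index
      map_add' := fun b c => by
        show (b + c).sum (fun i r => C r * q ^ i)
          = b.sum (fun i r => C r * q ^ i) + c.sum (fun i r => C r * q ^ i)
        exact Finsupp.sum_add_index' (fun i => by simp)
          (fun i r₁ r₂ => by rw [map_add, add_mul]) }
  let Φ : S →+ A := Ghom.comp E.symm.toAddMonoidHom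
  have hEF : ∀ b, E.symm (Fhom b) = b := fun b => E.symm_apply_apply b
  have hrep : ∀ s : S, Fhom (E.symm s) = s := fun s => E.apply_symm_apply s
  have hΦF : ∀ b, Φ (Fhom b) = b.sum fun i r => C r * q ^ i := by
    intro b
    show Ghom (E.symm.toAddMonoidHom (Fhom b)) = _
    rw [show E.symm.toAddMonoidHom (Fhom b) = E.symm (Fhom b) from rfl, hEF]
    rfl
  have hFsingle : ∀ (i : ℕ) (r : R), Fhom (Finsupp.single i r) = f r * x ^ i := by
    intro i r
    show (Finsupp.single i r).sum (fun i r => f r * x ^ i) = _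
    rw [Finsupp.sum_single_index (by simp)]
  have hΦsingle : ∀ (i : ℕ) (r : R), Φ (f r * x ^ i) = C r * q ^ i := by
    intro i r
    rw [← hFsingle, hΦF, Finsupp.sum_single_index (by simp)]
  have hcomm : ∀ (i : ℕ) (r : R),
      x * (f r * x ^ i) = f (σ r) * x ^ (i + 1) + f (δ r) * x ^ i := by
    intro i r
    rw [← mul_assoc, hS.rel r, add_mul, mul_assoc, ← pow_succ']
  have hΦx : ∀ s : S, Φ (x * s) = q * Φ s := by
    intro s
    conv_lhs => rw [← hrep s]
    conv_rhs => rw [← hrep s, hΦF]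
    set b := E.symm s with hb
    have h1 : x * Fhom b = b.sum fun i r => f (σ r) * x ^ (i + 1) + f (δ r) * x ^ i := by
      show x * b.sum (fun i r => f r * x ^ i) = _
      rw [Finsupp.mul_sum]
      exact Finsupp.sum_congr fun i _ => hcomm i (b i)
    rw [h1, map_finsuppSum, Finsupp.mul_sum]
    refine Finsupp.sum_congr fun i _ => ?_
    rw [map_add, hΦsingle, hΦsingle]
    calc C (σ (b i)) * q ^ (i + 1) + C (δ (b i)) * q ^ i
        = (C (σ (b i)) * q + C (δ (b i))) * q ^ i := by ring
      _ = (q * C (b i)) * q ^ i := by rw [← hq]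
      _ = q * (C (b i) * q ^ i) := by ring
  have hΦr : ∀ (r : R) (s : S), Φ (f r * s) = C r * Φ s := by
    intro r s
    conv_lhs => rw [← hrep s]
    conv_rhs => rw [← hrep s, hΦF]
    set b := E.symm s with hb
    have h1 : f r * Fhom b = b.sum fun i r' => f (r * r') * x ^ i := by
      show f r * b.sum (fun i r' => f r' * x ^ i) = _
      rw [Finsupp.mul_sum]
      exact Finsupp.sum_congr fun i _ => by rw [← mul_assoc, ← map_mul]
    rw [h1, map_finsuppSum, Finsupp.mul_sum]
    refine Finsupp.sum_congr fun i _ => ?_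
    rw [hΦsingle, map_mul, mul_assoc]
  have hΦxpow : ∀ (i : ℕ) (s : S), Φ (x ^ i * s) = q ^ i * Φ s := by
    intro i
    induction i with
    | zero => intro s; simp
    | succ n ih =>
      intro s
      rw [pow_succ, mul_assoc, ih, hΦx, pow_succ]
      ring
  have hΦmul : ∀ s t : S, Φ (s * t) = Φ s * Φ t := by
    intro s t
    conv_lhs => rw [← hrep s]
    conv_rhs => rw [← hrep s, hΦF]
    set b := E.symm s with hb
    have h1 : Fhom b * t = b.sum fun i r => f r * (x ^ i * t) := by
      show b.sum (fun i r => f r * x ^ i) * t = _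
      rw [Finsupp.sum_mul]
      exact Finsupp.sum_congr fun i _ => by rw [mul_assoc]
    rw [h1, map_finsuppSum, Finsupp.sum_mul]
    refine Finsupp.sum_congr fun i _ => ?_
    rw [hΦr, hΦxpow, ← mul_assoc]
  have hΦone : Φ (1 : S) = 1 := by
    have h : (1 : S) = f 1 * x ^ 0 := by simp
    rw [h, hΦsingle]; simp
  let Φr : S →+* A :=
    { toFun := Φ
      map_one' := hΦone
      map_mul' := hΦmul
      map_zero' := map_zero Φ
      map_add' := map_add Φ }
  have hΦc1 : Φr (f (δ a)) = C (δ a) := by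
    show Φ (f (δ a)) = C (δ a)
    have h : f (δ a) = f (δ a) * x ^ 0 := by simp
    rw [h, hΦsingle]; simp
  have hΦc2 : Φr (f a * x) = C (δ a) := by
    show Φ (f a * x) = C (δ a)
    have h : f a * x = f a * x ^ 1 := by simp
    rw [h, hΦsingle, pow_one, hqdef]
    calc C a * (C (δ a) * inv) = C (δ a) * (C a * inv) := by ring
      _ = C (δ a) := by rw [hinv, mul_one]
  rcases hsimple.simple.eq_bot_or_eq_top (TwoSidedIdeal.ker Φr) with hbot | htop
  · -- then f (δ a) - f a * x = 0, contradicting a ≠ 0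
    have hc : f (δ a) - f a * x ∈ TwoSidedIdeal.ker Φr := by
      rw [TwoSidedIdeal.mem_ker, map_sub, hΦc1, hΦc2, sub_self]
    rw [hbot, TwoSidedIdeal.mem_bot, sub_eq_zero] at hc
    -- f (δ a) = f a * x
    have h1 : Fhom (Finsupp.single 0 (δ a)) = Fhom (Finsupp.single 1 a) := by
      rw [hFsingle, hFsingle, pow_zero, mul_one, pow_one]
      exact hc
    have h2 := hFbij.injective h1
    have h3 := DFunLike.congr_fun h2 1
    simp [Finsupp.single_apply] at h3
    exact ha h3.symm
  · -- then 1 = 0 in A, so a is nilpotent, so a = 0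
    have h1 : (1 : S) ∈ TwoSidedIdeal.ker Φr := htop ▸ TwoSidedIdeal.mem_top S
    rw [TwoSidedIdeal.mem_ker, map_one] at h1
    have h2 : C (1 : R) = C 0 := by rw [map_one, map_zero, h1]
    obtain ⟨c, hc⟩ := (IsLocalization.eq_iff_exists (Submonoid.powers a) A).mp h2
    obtain ⟨n, hn⟩ := c.2
    have hn' : a ^ n = (c : R) := hn
    have hc0 : (c : R) = 0 := by simpa using hc
    exact ha (IsNilpotent.eq_zero ⟨n, by rw [hn', hc0]⟩)

/-- If `R` is a commutative reduced ring and the Ore extension `R[x;σ,δ]` is simple,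
then `σ` is injective. -/
theorem stmt_6 {R S : Type*} [CommRing R] [IsReduced R] [Ring S] (σ : R →+* R) (δ : R → R)
    (hδ : IsSigmaDerivation σ δ) (f : R →+* S) (x : S)
    (hS : IsOreExtension σ δ f x) (hsimple : IsSimpleRing S) :
    Function.Injective σ := by
  intro r r' h
  have h0 : σ (r - r') = 0 := by rw [map_sub, h, sub_self]
  have := ore_aux σ δ hδ f x hS hsimple h0
  exact sub_eq_zero.mp this
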